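/- Let (e_n) be a sequence in 𝓔 satisfying the approximate metric composition law e_n(p,q) = max_{p≤(z,r)≤q} [e_n(x,s;z,r) + e_n((z,r)⁺;y,t)] + ε_n with ε_n → 0, and suppose e ∈ 𝓔 does not satisfy the exact metric composition law. Then e_n does not hypo-converge to e; equivalently, there exists ε > 0 such that d(e_n, e) > ε for all large n in any metric inducing the hypograph topology. -/
import Mathlib


open Filter Set Topology MeasureTheory
open scoped ENNReal

noncomputable section

/-- The space-time (light-cone) partial order on `ℝ²`: `q ∈ ∨_p`. -/
def cle (p q : ℝ × ℝ) : Prop := |q.1 - p.1| ≤ q.2 - p.2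

/-- `e(r⁺, q) := sup {e(r', q) : r' ∈ ∨_r \ {r}}` for `r ≠ q`, and `0` otherwise. -/
def ePlus (e : ℝ × ℝ → ℝ × ℝ → ℝ) (r q : ℝ × ℝ) : ℝ :=
  if r = q then 0 else sSup ((fun r' => e r' q) '' {r' | cle r r' ∧ r' ≠ r})

/-- Membership in `𝓔`: non-negative upper semi-continuous functions on `ℝ⁴_≤`
(extended by `0` off `ℝ⁴_≤`) satisfying the generalized reverse triangle inequality. -/
structure IsE (e : ℝ × ℝ → ℝ × ℝ → ℝ) : Prop where
  nonneg : ∀ p q, 0 ≤ e p q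
  usc : UpperSemicontinuous (fun u : (ℝ × ℝ) × (ℝ × ℝ) => e u.1 u.2)
  zero_of_not_cle : ∀ p q, ¬ cle p q → e p q = 0
  triangle : ∀ p r q, cle p r → cle r q → e p r + ePlus e r q ≤ e p q

/-- Two point pairs `u, v ∈ ℝ⁴_≤` are disjoint if no `r` satisfies
`u.1 ≤ r ≤ u.2` and `v.1 ≤ r ≤ v.2` simultaneously. -/
def ptsDisjoint (u v : (ℝ × ℝ) × (ℝ × ℝ)) : Prop :=
  ¬ ∃ r : ℝ × ℝ, cle u.1 r ∧ cle r u.2 ∧ cle v.1 r ∧ cle r v.2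

/-- `Θ(e, u) := J((y-x)/(t-s), e(u)/(t-s)) · (t-s)` for `u = (x,s;y,t)`. -/
def ThetaPt (J : ℝ → ℝ → ℝ≥0∞) (e : ℝ × ℝ → ℝ × ℝ → ℝ) (u : (ℝ × ℝ) × (ℝ × ℝ)) : ℝ≥0∞ :=
  J ((u.2.1 - u.1.1) / (u.2.2 - u.1.2)) (e u.1 u.2 / (u.2.2 - u.1.2)) *
    ENNReal.ofReal (u.2.2 - u.1.2)

/-- The preliminary rate function `Θ(e)`: the supremum over countable collections of
pairwise disjoint non-degenerate points of the sums of `Θ(e, u_i)`. -/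
def Theta (J : ℝ → ℝ → ℝ≥0∞) (e : ℝ × ℝ → ℝ × ℝ → ℝ) : ℝ≥0∞ :=
  ⨆ (U : Set ((ℝ × ℝ) × (ℝ × ℝ))) (_ : U.Countable)
    (_ : ∀ u ∈ U, cle u.1 u.2 ∧ u.1.2 ≠ u.2.2)
    (_ : U.Pairwise ptsDisjoint), ∑' u : U, ThetaPt J e u.val

/-- Property A2 for the point-to-point rate function `J` (with `Fγ γ = F(γ,1)` the shape
function): joint convexity, continuity, vanishing below the shape function, and strict
monotonicity above it. -/
structure PropA2 (J : ℝ → ℝ → ℝ≥0∞) (Fγ : ℝ → ℝ) : Prop where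
  cont : Continuous fun v : ℝ × ℝ => J v.1 v.2
  convex : ∀ a b γ₁ γ₂ x₁ x₂ : ℝ, 0 ≤ a → 0 ≤ b → a + b = 1 →
    J (a * γ₁ + b * γ₂) (a * x₁ + b * x₂) ≤
      ENNReal.ofReal a * J γ₁ x₁ + ENNReal.ofReal b * J γ₂ x₂
  zero_of_le : ∀ γ x : ℝ, x ≤ Fγ γ → J γ x = 0
  strictMono : ∀ γ : ℝ, StrictMonoOn (J γ) (Ici (Fγ γ))

/-- Hypograph of a real-valued function. -/
def hypo {X : Type*} (f : X → ℝ) : Set (X × ℝ) := {z | z.2 ≤ f z.1}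

/-- Painlevé–Kuratowski lower limit of a sequence of sets. -/
def Li {Y : Type*} [TopologicalSpace Y] (A : ℕ → Set Y) : Set Y :=
  {a | ∃ u : ℕ → Y, Tendsto u atTop (nhds a) ∧ ∀ᶠ n in atTop, u n ∈ A n}

/-- Painlevé–Kuratowski upper limit of a sequence of sets. -/
def Ls {Y : Type*} [TopologicalSpace Y] (A : ℕ → Set Y) : Set Y :=
  {a | ∃ φ : ℕ → ℕ, StrictMono φ ∧ ∃ u : ℕ → Y, (∀ k, u k ∈ A (φ k)) ∧
    Tendsto u atTop (nhds a)}

/-- Hypo-convergence: Painlevé–Kuratowski convergence of hypographs. -/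
def HypoConv {X : Type*} [TopologicalSpace X] (fn : ℕ → X → ℝ) (f : X → ℝ) : Prop :=
  Li (fun n => hypo (fn n)) = hypo f ∧ Ls (fun n => hypo (fn n)) = hypo f

/-- The generalized metric composition law. -/
def MCL (e : ℝ × ℝ → ℝ × ℝ → ℝ) : Prop :=
  ∀ p q : ℝ × ℝ, ∀ r : ℝ, cle p q → p.2 ≤ r → r < q.2 →
    e p q = sSup {v : ℝ | ∃ z : ℝ, cle p (z, r) ∧ cle (z, r) q ∧ (z, r) ≠ q ∧
      v = e p (z, r) + ePlus e (z, r) q}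

private lemma aux_cle_refl (a : ℝ × ℝ) : cle a a := by simp [cle]

private lemma aux_cle_snd {a b : ℝ × ℝ} (h : cle a b) : a.2 ≤ b.2 := by
  have h' : |b.1 - a.1| ≤ b.2 - a.2 := h
  have := (abs_nonneg (b.1 - a.1)).trans h'
  linarith

private lemma aux_cle_trans {a b c : ℝ × ℝ} (h1 : cle a b) (h2 : cle b c) : cle a c := by
  have h1' : |b.1 - a.1| ≤ b.2 - a.2 := h1
  have h2' : |c.1 - b.1| ≤ c.2 - b.2 := h2
  show |c.1 - a.1| ≤ c.2 - a.2
  calc |c.1 - a.1| = |(c.1 - b.1) + (b.1 - a.1)| := by rw [sub_add_sub_cancel]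
    _ ≤ |c.1 - b.1| + |b.1 - a.1| := abs_add_le _ _
    _ ≤ (c.2 - b.2) + (b.2 - a.2) := add_le_add h2' h1'
    _ = c.2 - a.2 := by ring

private lemma aux_cle_lim {u v : ℕ → ℝ × ℝ} {a b : ℝ × ℝ}
    (hu : Tendsto u atTop (𝓝 a)) (hv : Tendsto v atTop (𝓝 b))
    (h : ∀ᶠ k in atTop, cle (u k) (v k)) : cle a b := by
  have hu1 : Tendsto (fun k => (u k).1) atTop (𝓝 a.1) := (continuous_fst.tendsto a).comp hu
  have hu2 : Tendsto (fun k => (u k).2) atTop (𝓝 a.2) := (continuous_snd.tendsto a).comp hu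
  have hv1 : Tendsto (fun k => (v k).1) atTop (𝓝 b.1) := (continuous_fst.tendsto b).comp hv
  have hv2 : Tendsto (fun k => (v k).2) atTop (𝓝 b.2) := (continuous_snd.tendsto b).comp hv
  show |b.1 - a.1| ≤ b.2 - a.2
  exact le_of_tendsto_of_tendsto ((hv1.sub hu1).abs) (hv2.sub hu2)
    (h.mono fun k hk => hk)

private lemma aux_cle_eq {a b : ℝ × ℝ} (h : cle a b) (h2 : b.2 ≤ a.2) : a = b := by
  have h3 : |b.1 - a.1| ≤ b.2 - a.2 := h
  have h4 : a.2 = b.2 := le_antisymm (aux_cle_snd h) h2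
  have h5 : |b.1 - a.1| ≤ 0 := by linarith
  have h6 : b.1 - a.1 = 0 := abs_eq_zero.mp (le_antisymm h5 (abs_nonneg _))
  have h7 : a.1 = b.1 := by linarith
  exact Prod.ext h7 h4

private lemma aux_ePlus_nonneg {f : ℝ × ℝ → ℝ × ℝ → ℝ} (hf : ∀ a b, 0 ≤ f a b)
    (c q : ℝ × ℝ) : 0 ≤ ePlus f c q := by
  unfold ePlus
  split
  · exact le_rfl
  · exact Real.sSup_nonneg (by rintro x ⟨r', -, rfl⟩; exact hf _ _)

private lemma aux_bdd_on_compact {g : ℝ × ℝ → ℝ} (hg : UpperSemicontinuous g)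
    {K : Set (ℝ × ℝ)} (hK : IsCompact K) : ∃ M : ℝ, 0 ≤ M ∧ ∀ x ∈ K, g x ≤ M := by
  have hcover : K ⊆ ⋃ n : ℕ, g ⁻¹' Iio (n : ℝ) := by
    intro x _
    obtain ⟨n, hn⟩ := exists_nat_gt (g x)
    exact Set.mem_iUnion.2 ⟨n, hn⟩
  obtain ⟨t, ht⟩ := hK.elim_finite_subcover (fun n : ℕ => g ⁻¹' Iio (n : ℝ))
    (fun n => hg.isOpen_preimage _) hcover
  refine ⟨((t.sup id : ℕ) : ℝ), Nat.cast_nonneg _, fun x hx => ?_⟩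
  obtain ⟨n, hn, hxn⟩ := Set.mem_iUnion₂.1 (ht hx)
  have hle : (n : ℝ) ≤ ((t.sup id : ℕ) : ℝ) := Nat.cast_le.2 (Finset.le_sup (f := id) hn)
  exact (le_of_lt hxn).trans hle

private lemma aux_bddAbove_slice {f : ℝ × ℝ → ℝ × ℝ → ℝ} (hf : IsE f) (c Q : ℝ × ℝ) :
    BddAbove ((fun r' => f r' Q) '' {r' | cle c r' ∧ r' ≠ c}) := by
  have hgusc : UpperSemicontinuous (fun r' : ℝ × ℝ => f r' Q) := by
    intro x y hy
    exact ((continuous_id.prodMk continuous_const).tendsto x).eventually (hf.usc (x, Q) y hy)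
  have hKclosed : IsClosed {r' : ℝ × ℝ | cle c r' ∧ cle r' Q} := by
    have h1 : IsClosed {r' : ℝ × ℝ | cle c r'} :=
      isClosed_le ((continuous_fst.sub continuous_const).abs)
        (continuous_snd.sub continuous_const)
    have h2 : IsClosed {r' : ℝ × ℝ | cle r' Q} :=
      isClosed_le ((continuous_const.sub continuous_fst).abs)
        (continuous_const.sub continuous_snd)
    exact h1.inter h2
  have hKsub : {r' : ℝ × ℝ | cle c r' ∧ cle r' Q} ⊆
      Set.Icc (c.1 - (Q.2 - c.2)) (c.1 + (Q.2 - c.2)) ×ˢ Set.Icc c.2 Q.2 := by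
    rintro r' ⟨h1, h2⟩
    have ha := aux_cle_snd h1
    have hb := aux_cle_snd h2
    have h1' : |r'.1 - c.1| ≤ r'.2 - c.2 := h1
    have h1'' : |r'.1 - c.1| ≤ Q.2 - c.2 := h1'.trans (by linarith)
    obtain ⟨hl, hr⟩ := abs_le.1 h1''
    exact ⟨⟨by linarith, by linarith⟩, ha, hb⟩
  have hKcomp : IsCompact {r' : ℝ × ℝ | cle c r' ∧ cle r' Q} :=
    IsCompact.of_isClosed_subset (isCompact_Icc.prod isCompact_Icc) hKclosed hKsub
  obtain ⟨M, hM0, hM⟩ := aux_bdd_on_compact hgusc hKcomp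
  refine ⟨M, ?_⟩
  rintro v ⟨r', ⟨h1, -⟩, rfl⟩
  show f r' Q ≤ M
  by_cases hc2 : cle r' Q
  · exact hM r' ⟨h1, hc2⟩
  · rw [hf.zero_of_not_cle _ _ hc2]; exact hM0

private lemma aux_bddAbove_S {f : ℝ × ℝ → ℝ × ℝ → ℝ} (hf : IsE f) (A B : ℝ × ℝ) (t : ℝ) :
    BddAbove {v : ℝ | ∃ z : ℝ, cle A (z, t) ∧ cle (z, t) B ∧ (z, t) ≠ B ∧
      v = f A (z, t) + ePlus f (z, t) B} :=
  ⟨f A B, by rintro v ⟨z, h1, h2, -, rfl⟩; exact hf.triangle _ _ _ h1 h2⟩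

private lemma aux_exists_mid {a b : ℝ × ℝ} (h : cle a b) {t : ℝ} (h1 : a.2 ≤ t)
    (h2 : t ≤ b.2) : ∃ z : ℝ, cle a (z, t) ∧ cle (z, t) b := by
  have hab : |b.1 - a.1| ≤ b.2 - a.2 := h
  rcases eq_or_lt_of_le (aux_cle_snd h) with hd | hd
  · refine ⟨a.1, ?_, ?_⟩
    · show |a.1 - a.1| ≤ t - a.2
      simp only [sub_self, abs_zero]
      linarith
    · show |b.1 - a.1| ≤ b.2 - t
      have : t ≤ b.2 := h2
      have ht : t = a.2 := le_antisymm (by linarith [hd]) h1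
      calc |b.1 - a.1| ≤ b.2 - a.2 := hab
        _ = b.2 - t := by rw [ht]
  · have hd0 : 0 < b.2 - a.2 := by linarith
    set θ : ℝ := (t - a.2) / (b.2 - a.2) with hθ
    have hθ0 : 0 ≤ θ := div_nonneg (by linarith) hd0.le
    have hθ1 : θ ≤ 1 := by rw [hθ, div_le_one hd0]; linarith
    have hθd : θ * (b.2 - a.2) = t - a.2 := div_mul_cancel₀ _ hd0.ne'
    refine ⟨a.1 + θ * (b.1 - a.1), ?_, ?_⟩
    · show |(a.1 + θ * (b.1 - a.1)) - a.1| ≤ t - a.2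
      have he : (a.1 + θ * (b.1 - a.1)) - a.1 = θ * (b.1 - a.1) := by ring
      rw [he, abs_mul, abs_of_nonneg hθ0]
      calc θ * |b.1 - a.1| ≤ θ * (b.2 - a.2) := mul_le_mul_of_nonneg_left hab hθ0
        _ = t - a.2 := hθd
    · show |b.1 - (a.1 + θ * (b.1 - a.1))| ≤ b.2 - t
      have he : b.1 - (a.1 + θ * (b.1 - a.1)) = (1 - θ) * (b.1 - a.1) := by ring
      rw [he, abs_mul, abs_of_nonneg (by linarith : (0:ℝ) ≤ 1 - θ)]
      calc (1 - θ) * |b.1 - a.1| ≤ (1 - θ) * (b.2 - a.2) :=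
            mul_le_mul_of_nonneg_left hab (by linarith)
        _ = b.2 - t := by rw [sub_mul, one_mul, hθd]; ring

private lemma aux_split_choice {f : ℝ × ℝ → ℝ × ℝ → ℝ} (hf : IsE f) {A B : ℝ × ℝ}
    {t εn δ : ℝ} (hAB : cle A B) (hA : A.2 ≤ t) (hB : t < B.2) (hδ : 0 < δ)
    (h1 : f A B ≤ sSup {v : ℝ | ∃ z : ℝ, cle A (z, t) ∧ cle (z, t) B ∧ (z, t) ≠ B ∧
        v = f A (z, t) + ePlus f (z, t) B} + εn) :
    ∃ z : ℝ, ∃ x : ℝ × ℝ, cle A (z, t) ∧ cle (z, t) B ∧ (z, t) ≠ B ∧ cle (z, t) x ∧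
      x ≠ (z, t) ∧ cle x B ∧ f A B ≤ f A (z, t) + f x B + (εn + 2 * δ) := by
  set S : Set ℝ := {v : ℝ | ∃ z : ℝ, cle A (z, t) ∧ cle (z, t) B ∧ (z, t) ≠ B ∧
      v = f A (z, t) + ePlus f (z, t) B} with hSdef
  have hSne : S.Nonempty := by
    obtain ⟨z, hz1, hz2⟩ := aux_exists_mid hAB hA hB.le
    refine ⟨f A (z, t) + ePlus f (z, t) B, z, hz1, hz2, ?_, rfl⟩
    intro hEq
    have ht : t = B.2 := congrArg Prod.snd hEq
    linarith
  obtain ⟨v, hvS, hvgt⟩ := exists_lt_of_lt_csSup hSne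
    (show sSup S - δ < sSup S by linarith)
  obtain ⟨z, hz1, hz2, hz3, rfl⟩ := hvS
  have hEP : ePlus f (z, t) B =
      sSup ((fun r' => f r' B) '' {r' | cle (z, t) r' ∧ r' ≠ (z, t)}) := by
    unfold ePlus; rw [if_neg hz3]
  set T : Set ℝ := (fun r' => f r' B) '' {r' | cle (z, t) r' ∧ r' ≠ (z, t)} with hTdef
  have hTne : T.Nonempty := ⟨f B B, B, ⟨hz2, Ne.symm hz3⟩, rfl⟩
  obtain ⟨w, hwT, hwgt⟩ := exists_lt_of_lt_csSup hTne
    (show sSup T - δ < sSup T by linarith)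
  obtain ⟨x₀, ⟨hx1, hx2⟩, rfl⟩ := hwT
  have hwgt' : sSup T - δ < f x₀ B := hwgt
  have h2 := hvgt
  rw [hEP] at h2
  by_cases hc : cle x₀ B
  · exact ⟨z, x₀, hz1, hz2, hz3, hx1, hx2, hc, by linarith⟩
  · have h0 : f x₀ B = 0 := hf.zero_of_not_cle _ _ hc
    have hBB : 0 ≤ f B B := hf.nonneg _ _
    rw [h0] at hwgt'
    exact ⟨z, B, hz1, hz2, hz3, hz2, Ne.symm hz3, aux_cle_refl B, by linarith⟩

private lemma aux_absorb {f : ℝ × ℝ → ℝ × ℝ → ℝ} (hf : IsE f) {A c d x : ℝ × ℝ}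
    (h1 : cle A c) (h2 : cle c d) (hcd : c ≠ d) (h3 : cle c x) (h4 : x ≠ c) :
    f A c + f x d ≤ f A d := by
  have hx : f x d ≤ ePlus f c d := by
    unfold ePlus; rw [if_neg hcd]
    exact le_csSup (aux_bddAbove_slice hf c d) ⟨x, ⟨h3, h4⟩, rfl⟩
  linarith [hf.triangle A c d h1 h2]

private lemma aux_abs_bound {x : ℕ → ℝ} {a : ℝ} (h : Tendsto x atTop (𝓝 a)) :
    ∃ M : ℝ, 0 ≤ M ∧ ∀ n, |x n| ≤ M := by
  obtain ⟨Ub, hU⟩ := h.bddAbove_range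
  obtain ⟨Lb, hL⟩ := h.bddBelow_range
  refine ⟨max |Ub| |Lb|, le_trans (abs_nonneg Ub) (le_max_left _ _), fun n => ?_⟩
  have h1 : x n ≤ Ub := hU ⟨n, rfl⟩
  have h2 : Lb ≤ x n := hL ⟨n, rfl⟩
  rw [abs_le]
  constructor
  · calc -(max |Ub| |Lb|) ≤ -|Lb| := neg_le_neg (le_max_right _ _)
      _ ≤ Lb := neg_abs_le Lb
      _ ≤ x n := h2
  · exact h1.trans ((le_abs_self Ub).trans (le_max_left _ _))

private lemma aux_ls_bound {Y : Type*} [TopologicalSpace Y] {fn : ℕ → Y → ℝ} {f : Y → ℝ}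
    (hLs : Ls (fun n => hypo (fn n)) ⊆ hypo f) {φ : ℕ → ℕ} (hφ : StrictMono φ)
    {w : ℕ → Y} {w₀ : Y} (hw : Tendsto w atTop (𝓝 w₀)) {c : ℝ}
    (hc : ∀ j, c ≤ fn (φ j) (w j)) : c ≤ f w₀ :=
  hLs ⟨φ, hφ, fun j => (w j, c), fun j => hc j, hw.prodMk_nhds tendsto_const_nhds⟩

private lemma aux_two_piece {Y : Type*} [TopologicalSpace Y] {fn : ℕ → Y → ℝ} {f : Y → ℝ}
    (hLs : Ls (fun n => hypo (fn n)) ⊆ hypo f) {φ : ℕ → ℕ} (hφ : StrictMono φ)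
    {u v : ℕ → Y} {u₀ v₀ : Y} (hu : Tendsto u atTop (𝓝 u₀)) (hv : Tendsto v atTop (𝓝 v₀))
    {cv err : ℕ → ℝ} {C : ℝ} (hcv : Tendsto cv atTop (𝓝 C))
    (herr : Tendsto err atTop (𝓝 0))
    (hineq : ∀ᶠ k in atTop, cv k ≤ fn (φ k) (u k) + fn (φ k) (v k) + err k) :
    C ≤ f u₀ + f v₀ := by
  by_contra hcon
  push_neg at hcon
  set A := f u₀ with hA
  set B := f v₀ with hB
  set δ : ℝ := (C - (A + B)) / 3 with hδdef
  have hδ : 0 < δ := by rw [hδdef]; linarith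
  have h1 : ∀ᶠ k in atTop, C - δ < cv k := hcv.eventually (eventually_gt_nhds (by linarith))
  have h2 : ∀ᶠ k in atTop, err k < δ := herr.eventually (eventually_lt_nhds hδ)
  have h3 : ∀ᶠ k in atTop,
      A + δ / 2 ≤ fn (φ k) (u k) ∨ B + δ / 2 ≤ fn (φ k) (v k) := by
    filter_upwards [h1, h2, hineq] with k hk1 hk2 hk3
    by_contra hno
    push_neg at hno
    obtain ⟨ha, hb⟩ := hno
    have : C = A + B + 3 * δ := by rw [hδdef]; ring
    linarith
  by_cases hfreq : ∃ᶠ k in atTop, A + δ / 2 ≤ fn (φ k) (u k)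
  · obtain ⟨ψ, hψ, hP⟩ := Filter.extraction_of_frequently_atTop hfreq
    have := aux_ls_bound hLs (hφ.comp hψ) (hu.comp hψ.tendsto_atTop) (fun j => hP j)
    linarith
  · have hev : ∀ᶠ k in atTop, B + δ / 2 ≤ fn (φ k) (v k) := by
      have hnot := Filter.not_frequently.mp hfreq
      filter_upwards [hnot, h3] with k hk1 hk2
      tauto
    obtain ⟨ψ, hψ, hP⟩ := Filter.extraction_of_frequently_atTop hev.frequently
    have := aux_ls_bound hLs (hφ.comp hψ) (hv.comp hψ.tendsto_atTop) (fun j => hP j)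
    linarith


/-- A sequence in `𝓔` satisfying the approximate metric composition law (with errors
`ε_n → 0`) cannot hypo-converge to a metric failing the exact metric composition law. -/
theorem stmt19 (en : ℕ → ℝ × ℝ → ℝ × ℝ → ℝ) (hen : ∀ n, IsE (en n))
    (ε : ℕ → ℝ) (hε : Tendsto ε atTop (nhds 0))
    (happ : ∀ (n : ℕ) (p q : ℝ × ℝ) (r : ℝ), cle p q → p.2 ≤ r → r < q.2 →
      sSup {v : ℝ | ∃ z : ℝ, cle p (z, r) ∧ cle (z, r) q ∧ (z, r) ≠ q ∧
          v = en n p (z, r) + ePlus (en n) (z, r) q} ≤ en n p q ∧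
      en n p q ≤ sSup {v : ℝ | ∃ z : ℝ, cle p (z, r) ∧ cle (z, r) q ∧ (z, r) ≠ q ∧
          v = en n p (z, r) + ePlus (en n) (z, r) q} + ε n)
    (e : ℝ × ℝ → ℝ × ℝ → ℝ) (he : IsE e) (hnot : ¬ MCL e) :
    ¬ HypoConv (fun n => fun u : (ℝ × ℝ) × (ℝ × ℝ) => en n u.1 u.2)
      (fun u : (ℝ × ℝ) × (ℝ × ℝ) => e u.1 u.2) := by
  rintro ⟨hLi, hLs⟩
  have hLi' := hLi.symm.subset
  have hLs' := hLs.subset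
  unfold MCL at hnot
  push_neg at hnot
  obtain ⟨p, q, r, hpq, hpr, hrq, hne⟩ := hnot
  set S : Set ℝ := {v : ℝ | ∃ z : ℝ, cle p (z, r) ∧ cle (z, r) q ∧ (z, r) ≠ q ∧
      v = e p (z, r) + ePlus e (z, r) q} with hSdef
  set C : ℝ := e p q with hCdef
  have hSbdd : BddAbove S := aux_bddAbove_S he p q r
  have hDle : sSup S ≤ C :=
    Real.sSup_le (by rintro v ⟨z, h1, h2, -, rfl⟩; exact he.triangle _ _ _ h1 h2)
      (he.nonneg p q)
  have hD_lt : sSup S < C := lt_of_le_of_ne hDle (Ne.symm hne)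
  have hD0 : 0 ≤ sSup S := by
    obtain ⟨z1, hz1, hz2⟩ := aux_exists_mid hpq hpr hrq.le
    have hmem : e p (z1, r) + ePlus e (z1, r) q ∈ S := by
      refine ⟨z1, hz1, hz2, ?_, rfl⟩
      intro hEq
      have : r = q.2 := congrArg Prod.snd hEq
      linarith
    have hnn : (0:ℝ) ≤ e p (z1, r) + ePlus e (z1, r) q :=
      add_nonneg (he.nonneg _ _) (aux_ePlus_nonneg he.nonneg _ _)
    exact hnn.trans (le_csSup hSbdd hmem)
  have hC0 : 0 < C := lt_of_le_of_lt hD0 hD_lt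
  obtain ⟨U, hUt, hUm⟩ := hLi'
    (show ((((p, q) : (ℝ × ℝ) × (ℝ × ℝ)), C)) ∈
      hypo (fun u : (ℝ × ℝ) × (ℝ × ℝ) => e u.1 u.2) from hCdef.le)
  set P : ℕ → ℝ × ℝ := fun n => (U n).1.1 with hPdef
  set Q : ℕ → ℝ × ℝ := fun n => (U n).1.2 with hQdef
  set y : ℕ → ℝ := fun n => (U n).2 with hydef
  have hPt : Tendsto P atTop (𝓝 p) := ((continuous_fst.comp continuous_fst).tendsto _).comp hUt
  have hQt : Tendsto Q atTop (𝓝 q) := ((continuous_snd.comp continuous_fst).tendsto _).comp hUt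
  have hyt : Tendsto y atTop (𝓝 C) := (continuous_snd.tendsto _).comp hUt
  have hP1t : Tendsto (fun n => (P n).1) atTop (𝓝 p.1) := (continuous_fst.tendsto _).comp hPt
  have hP2t : Tendsto (fun n => (P n).2) atTop (𝓝 p.2) := (continuous_snd.tendsto _).comp hPt
  have hQ1t : Tendsto (fun n => (Q n).1) atTop (𝓝 q.1) := (continuous_fst.tendsto _).comp hQt
  have hQ2t : Tendsto (fun n => (Q n).2) atTop (𝓝 q.2) := (continuous_snd.tendsto _).comp hQt
  set r1 : ℕ → ℝ := fun n => max r (P n).2 with hr1def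
  have hr1t : Tendsto r1 atTop (𝓝 r) := by
    have h := (tendsto_const_nhds : Tendsto (fun _ : ℕ => r) atTop (𝓝 r)).max hP2t
    rwa [max_eq_left hpr] at h
  set ε' : ℕ → ℝ := fun n => |ε n| + 1 / ((n : ℝ) + 1) with hε'def
  have hε'pos : ∀ n, 0 < ε' n := fun n => by positivity
  have hε't : Tendsto ε' atTop (𝓝 0) := by
    have h1 : Tendsto (fun n => |ε n|) atTop (𝓝 0) := by simpa using hε.abs
    have h2 : Tendsto (fun n : ℕ => 1 / ((n : ℝ) + 1)) atTop (𝓝 0) :=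
      tendsto_one_div_add_atTop_nhds_zero_nat
    have h3 := h1.add h2
    rw [add_zero] at h3
    exact h3
  set GOOD : ℕ → Prop := fun n => (y n ≤ en n (P n) (Q n)) ∧ 0 < y n ∧ r1 n < (Q n).2
    with hGOODdef
  have hGOODev : ∀ᶠ n in atTop, GOOD n := by
    have h1 : ∀ᶠ n in atTop, y n ≤ en n (P n) (Q n) := hUm.mono fun n hn => hn
    have h2 : ∀ᶠ n in atTop, 0 < y n := hyt.eventually (eventually_gt_nhds hC0)
    have h3 : ∀ᶠ n in atTop, r1 n < (Q n).2 := by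
      have hd : Tendsto (fun n => (Q n).2 - r1 n) atTop (𝓝 (q.2 - r)) := hQ2t.sub hr1t
      have h := hd.eventually (eventually_gt_nhds (show (0:ℝ) < q.2 - r by linarith))
      exact h.mono fun n hn => by linarith
    filter_upwards [h1, h2, h3] with n a b c using ⟨a, b, c⟩
  obtain ⟨MP1, hMP1n, hMP1⟩ := aux_abs_bound hP1t
  obtain ⟨MP2, hMP2n, hMP2⟩ := aux_abs_bound hP2t
  obtain ⟨MQ1, hMQ1n, hMQ1⟩ := aux_abs_bound hQ1t
  obtain ⟨MQ2, hMQ2n, hMQ2⟩ := aux_abs_bound hQ2t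
  obtain ⟨Mr1, hMr1n, hMr1⟩ := aux_abs_bound hr1t
  set M : ℝ := MP1 + MP2 + MQ1 + MQ2 + Mr1 + Mr1 + 1 with hMdef
  have hM0 : 0 ≤ M := by rw [hMdef]; linarith
  have hCH : ∀ n, ∃ z : ℝ, ∃ x : ℝ × ℝ,
      (GOOD n → (cle (P n) (z, r1 n) ∧ cle (z, r1 n) (Q n) ∧ (z, r1 n) ≠ Q n ∧
        cle (z, r1 n) x ∧ x ≠ (z, r1 n) ∧ cle x (Q n) ∧
        y n ≤ en n (P n) (z, r1 n) + en n x (Q n) + (ε n + 2 * ε' n))) ∧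
      (|z| ≤ M ∧ |x.1| ≤ M ∧ |x.2| ≤ M) := by
    intro n
    by_cases hg : GOOD n
    · obtain ⟨h1, h2, h3⟩ := hg
      have hclePQ : cle (P n) (Q n) := by
        by_contra hc
        rw [(hen n).zero_of_not_cle _ _ hc] at h1
        linarith
      obtain ⟨z, x, q1, q2, q3, q4, q5, q6, q7⟩ := aux_split_choice (hen n) hclePQ
        (le_max_right _ _) h3 (hε'pos n)
        ((happ n (P n) (Q n) (r1 n) hclePQ (le_max_right _ _) h3).2)
      have hzb : |z| ≤ M := by
        have hz1 : |z - (P n).1| ≤ r1 n - (P n).2 := q1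
        have hz2 : |z| - |(P n).1| ≤ |z - (P n).1| := abs_sub_abs_le_abs_sub z (P n).1
        have hz3 : r1 n ≤ Mr1 := (le_abs_self _).trans (hMr1 n)
        have hz4 : -(P n).2 ≤ MP2 := (neg_le_abs _).trans (hMP2 n)
        have hz5 : |(P n).1| ≤ MP1 := hMP1 n
        rw [hMdef]; linarith
      have hx2a : r1 n ≤ x.2 := aux_cle_snd q4
      have hx2b : x.2 ≤ (Q n).2 := aux_cle_snd q6
      have hxb2 : |x.2| ≤ M := by
        have hz3 : r1 n ≥ -Mr1 := neg_le_of_abs_le (hMr1 n)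
        have hz4 : (Q n).2 ≤ MQ2 := (le_abs_self _).trans (hMQ2 n)
        rw [hMdef, abs_le]; constructor <;> linarith
      have hxb1 : |x.1| ≤ M := by
        have hq : |(Q n).1 - x.1| ≤ (Q n).2 - x.2 := q6
        have hq2 : |x.1| - |(Q n).1| ≤ |x.1 - (Q n).1| := abs_sub_abs_le_abs_sub _ _
        rw [abs_sub_comm] at hq2
        have hz3 : r1 n ≥ -Mr1 := neg_le_of_abs_le (hMr1 n)
        have hz4 : (Q n).2 ≤ MQ2 := (le_abs_self _).trans (hMQ2 n)
        have hz5 : |(Q n).1| ≤ MQ1 := hMQ1 n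
        rw [hMdef]; linarith
      exact ⟨z, x, fun _ => ⟨q1, q2, q3, q4, q5, q6, le_trans h1 q7⟩, hzb, hxb1, hxb2⟩
    · refine ⟨0, (0, 0), fun hg' => absurd hg' hg, ?_, ?_, ?_⟩ <;> simpa using hM0
  choose zf xf hh using hCH
  have hPR := fun n => (hh n).1
  have hBnd := fun n => (hh n).2
  clear hh
  set W : ℕ → ℝ × ℝ × ℝ := fun n => (zf n, (xf n).1, (xf n).2) with hWdef
  have hWmem : ∀ n, W n ∈
      (Set.Icc (-M) M ×ˢ (Set.Icc (-M) M ×ˢ Set.Icc (-M) M)) := by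
    intro n
    obtain ⟨b1, b2, b3⟩ := hBnd n
    exact ⟨abs_le.1 b1, abs_le.1 b2, abs_le.1 b3⟩
  obtain ⟨a, -, φ, hφ, hWt⟩ :=
    (isCompact_Icc.prod (isCompact_Icc.prod isCompact_Icc)).tendsto_subseq hWmem
  have hzt : Tendsto (fun k => zf (φ k)) atTop (𝓝 a.1) :=
    (continuous_fst.tendsto _).comp hWt
  have hx1t : Tendsto (fun k => (xf (φ k)).1) atTop (𝓝 a.2.1) :=
    ((continuous_fst.comp continuous_snd).tendsto _).comp hWt
  have hx2t : Tendsto (fun k => (xf (φ k)).2) atTop (𝓝 a.2.2) :=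
    ((continuous_snd.comp continuous_snd).tendsto _).comp hWt
  set z₀ : ℝ := a.1 with hz₀def
  set R₀ : ℝ × ℝ := (a.2.1, a.2.2) with hR₀def
  have hxt : Tendsto (fun k => xf (φ k)) atTop (𝓝 R₀) := hx1t.prodMk_nhds hx2t
  have hPφ : Tendsto (fun k => P (φ k)) atTop (𝓝 p) := hPt.comp hφ.tendsto_atTop
  have hQφ : Tendsto (fun k => Q (φ k)) atTop (𝓝 q) := hQt.comp hφ.tendsto_atTop
  have hyφ : Tendsto (fun k => y (φ k)) atTop (𝓝 C) := hyt.comp hφ.tendsto_atTop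
  have hr1φ : Tendsto (fun k => r1 (φ k)) atTop (𝓝 r) := hr1t.comp hφ.tendsto_atTop
  have hεφ : Tendsto (fun k => ε (φ k)) atTop (𝓝 0) := hε.comp hφ.tendsto_atTop
  have hε'φ : Tendsto (fun k => ε' (φ k)) atTop (𝓝 0) := hε't.comp hφ.tendsto_atTop
  have hQ2φ : Tendsto (fun k => (Q (φ k)).2) atTop (𝓝 q.2) := hQ2t.comp hφ.tendsto_atTop
  have hGφ : ∀ᶠ k in atTop, GOOD (φ k) := hφ.tendsto_atTop.eventually hGOODev
  have hczt : Tendsto (fun k => ((zf (φ k), r1 (φ k)) : ℝ × ℝ)) atTop (𝓝 ((z₀, r) : ℝ × ℝ)) :=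
    hzt.prodMk_nhds hr1φ
  have hp_c : cle p ((z₀, r) : ℝ × ℝ) := aux_cle_lim hPφ hczt
    (by filter_upwards [hGφ] with k hk; exact (hPR (φ k) hk).1)
  have hc_R : cle ((z₀, r) : ℝ × ℝ) R₀ := aux_cle_lim hczt hxt
    (by filter_upwards [hGφ] with k hk; exact (hPR (φ k) hk).2.2.2.1)
  have hR_q : cle R₀ q := aux_cle_lim hxt hQφ
    (by filter_upwards [hGφ] with k hk; exact (hPR (φ k) hk).2.2.2.2.2.1)
  have hc_q : cle ((z₀, r) : ℝ × ℝ) q := aux_cle_lim hczt hQφ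
    (by filter_upwards [hGφ] with k hk; exact (hPR (φ k) hk).2.1)
  have hc_ne_q : ((z₀, r) : ℝ × ℝ) ≠ q := by
    intro hEq
    have : r = q.2 := congrArg Prod.snd hEq
    linarith
  have hDge : e p ((z₀, r) : ℝ × ℝ) + ePlus e ((z₀, r) : ℝ × ℝ) q ≤ sSup S :=
    le_csSup hSbdd ⟨z₀, hp_c, hc_q, hc_ne_q, rfl⟩
  have hEPq : ePlus e ((z₀, r) : ℝ × ℝ) q =
      sSup ((fun r' => e r' q) '' {r' | cle ((z₀, r) : ℝ × ℝ) r' ∧ r' ≠ ((z₀, r) : ℝ × ℝ)}) := by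
    unfold ePlus; rw [if_neg hc_ne_q]
  have hErrt : Tendsto (fun k => ε (φ k) + 2 * ε' (φ k)) atTop (𝓝 0) := by
    have h := hεφ.add (hε'φ.const_mul 2)
    simpa using h
  by_cases hcase : R₀ = ((z₀, r) : ℝ × ℝ)
  · -- collapse case
    have claim : ∀ m : ℕ, ∃ N : ℝ × ℝ, cle ((z₀, r) : ℝ × ℝ) N ∧
        N.2 = r + (q.2 - r) / ((m : ℝ) + 2) ∧
        C ≤ e p N + ePlus e ((z₀, r) : ℝ × ℝ) q := by
      intro m
      set lam : ℝ := r + (q.2 - r) / ((m : ℝ) + 2) with hlamdef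
      have hm2 : (0:ℝ) < (m : ℝ) + 2 := by positivity
      have hlam1 : r < lam := by
        have : 0 < (q.2 - r) / ((m : ℝ) + 2) := div_pos (by linarith) hm2
        rw [hlamdef]; linarith
      have hlam2 : lam < q.2 := by
        have : (q.2 - r) / ((m : ℝ) + 2) < q.2 - r := div_lt_self (by linarith) (by linarith)
        rw [hlamdef]; linarith
      have hlamabs : |lam| ≤ |r| + |q.2| := by
        rw [abs_le]
        constructor
        · have : -|r| ≤ r := neg_abs_le r
          have h2 : (0:ℝ) ≤ |q.2| := abs_nonneg _
          linarith
        · have : q.2 ≤ |q.2| := le_abs_self _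
          have h2 : (0:ℝ) ≤ |r| := abs_nonneg _
          linarith
      set M2 : ℝ := MQ1 + MQ2 + MQ2 + |r| + |q.2| + 1 with hM2def
      have hM20 : 0 ≤ M2 := by
        have := abs_nonneg r
        have := abs_nonneg q.2
        rw [hM2def]; linarith
      have hev1 : ∀ᶠ k in atTop, (xf (φ k)).2 ≤ lam := by
        have ha2 : a.2.2 = r := congrArg Prod.snd hcase
        have h := hx2t.eventually (eventually_lt_nhds (show a.2.2 < lam by rw [ha2]; exact hlam1))
        exact h.mono fun k hk => hk.le
      have hev2 : ∀ᶠ k in atTop, lam < (Q (φ k)).2 :=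
        hQ2φ.eventually (eventually_gt_nhds hlam2)
      have hev3 : ∀ᶠ k in atTop, r1 (φ k) < lam := hr1φ.eventually (eventually_lt_nhds hlam1)
      set GOOD2 : ℕ → Prop := fun k => GOOD (φ k) ∧ (xf (φ k)).2 ≤ lam ∧
        lam < (Q (φ k)).2 ∧ r1 (φ k) < lam with hG2def
      have hG2ev : ∀ᶠ k in atTop, GOOD2 k := by
        filter_upwards [hGφ, hev1, hev2, hev3] with k a b c d using ⟨a, b, c, d⟩
      have hCH2 : ∀ k, ∃ u' : ℝ, ∃ x' : ℝ × ℝ,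
          (GOOD2 k → (cle (xf (φ k)) ((u', lam) : ℝ × ℝ) ∧
            cle (P (φ k)) ((u', lam) : ℝ × ℝ) ∧
            cle ((u', lam) : ℝ × ℝ) x' ∧ cle x' (Q (φ k)) ∧
            y (φ k) ≤ en (φ k) (P (φ k)) (u', lam) + en (φ k) x' (Q (φ k)) +
              2 * (ε (φ k) + 2 * ε' (φ k)))) ∧
          (|u'| ≤ M2 ∧ |x'.1| ≤ M2 ∧ |x'.2| ≤ M2) := by
        intro k
        by_cases hg : GOOD2 k
        · obtain ⟨hgO, hb1, hb2, hb3⟩ := hg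
          obtain ⟨p1, p2, p3, p4, p5, p6, p7⟩ := hPR (φ k) hgO
          obtain ⟨u', x', s1, s2, s3, s4, s5, s6, s7⟩ := aux_split_choice (hen (φ k)) p6
            hb1 hb2 (hε'pos (φ k))
            ((happ (φ k) (xf (φ k)) (Q (φ k)) lam p6 hb1 hb2).2)
          have hne_cd : ((zf (φ k), r1 (φ k)) : ℝ × ℝ) ≠ ((u', lam) : ℝ × ℝ) := by
            intro hEq
            have : r1 (φ k) = lam := congrArg Prod.snd hEq
            linarith
          have habs : en (φ k) (P (φ k)) (zf (φ k), r1 (φ k)) +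
              en (φ k) (xf (φ k)) (u', lam) ≤ en (φ k) (P (φ k)) (u', lam) :=
            aux_absorb (hen (φ k)) p1 (aux_cle_trans p4 s1) hne_cd p4 p5
          have hub : |u'| ≤ M2 := by
            have hq : |(Q (φ k)).1 - u'| ≤ (Q (φ k)).2 - lam := s2
            have hq2 : |u'| - |(Q (φ k)).1| ≤ |u' - (Q (φ k)).1| := abs_sub_abs_le_abs_sub _ _
            rw [abs_sub_comm] at hq2
            have h4 : (Q (φ k)).2 ≤ MQ2 := (le_abs_self _).trans (hMQ2 (φ k))
            have h5 : |(Q (φ k)).1| ≤ MQ1 := hMQ1 (φ k)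
            have h6 : -lam ≤ |r| + |q.2| := by
              have := abs_le.1 hlamabs
              linarith [this.1]
            rw [hM2def]; linarith
          have hx2a : lam ≤ x'.2 := aux_cle_snd s4
          have hx2b : x'.2 ≤ (Q (φ k)).2 := aux_cle_snd s6
          have hxb2 : |x'.2| ≤ M2 := by
            have h4 : (Q (φ k)).2 ≤ MQ2 := (le_abs_self _).trans (hMQ2 (φ k))
            have h6 : -lam ≤ |r| + |q.2| := by
              have := abs_le.1 hlamabs
              linarith [this.1]
            rw [hM2def, abs_le]; constructor <;> linarith
          have hxb1 : |x'.1| ≤ M2 := by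
            have hq : |(Q (φ k)).1 - x'.1| ≤ (Q (φ k)).2 - x'.2 := s6
            have hq2 : |x'.1| - |(Q (φ k)).1| ≤ |x'.1 - (Q (φ k)).1| := abs_sub_abs_le_abs_sub _ _
            rw [abs_sub_comm] at hq2
            have h4 : (Q (φ k)).2 ≤ MQ2 := (le_abs_self _).trans (hMQ2 (φ k))
            have h5 : |(Q (φ k)).1| ≤ MQ1 := hMQ1 (φ k)
            have h6 : -lam ≤ |r| + |q.2| := by
              have := abs_le.1 hlamabs
              linarith [this.1]
            rw [hM2def]; linarith
          refine ⟨u', x', fun _ => ⟨s1, aux_cle_trans p1 (aux_cle_trans p4 s1), s4, s6, ?_⟩,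
            hub, hxb1, hxb2⟩
          linarith
        · refine ⟨0, (0, 0), fun hg' => absurd hg' hg, ?_, ?_, ?_⟩ <;> simpa using hM20
      choose uf xg hh2 using hCH2
      have hPR2 := fun k => (hh2 k).1
      have hBnd2 := fun k => (hh2 k).2
      clear hh2
      set W2 : ℕ → ℝ × ℝ × ℝ := fun k => (uf k, (xg k).1, (xg k).2) with hW2def
      have hW2mem : ∀ k, W2 k ∈
          (Set.Icc (-M2) M2 ×ˢ (Set.Icc (-M2) M2 ×ˢ Set.Icc (-M2) M2)) := by
        intro k
        obtain ⟨b1, b2, b3⟩ := hBnd2 k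
        exact ⟨abs_le.1 b1, abs_le.1 b2, abs_le.1 b3⟩
      obtain ⟨b, -, ψ, hψ, hW2t⟩ :=
        (isCompact_Icc.prod (isCompact_Icc.prod isCompact_Icc)).tendsto_subseq hW2mem
      have hut : Tendsto (fun j => uf (ψ j)) atTop (𝓝 b.1) :=
        (continuous_fst.tendsto _).comp hW2t
      have hxg1t : Tendsto (fun j => (xg (ψ j)).1) atTop (𝓝 b.2.1) :=
        ((continuous_fst.comp continuous_snd).tendsto _).comp hW2t
      have hxg2t : Tendsto (fun j => (xg (ψ j)).2) atTop (𝓝 b.2.2) :=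
        ((continuous_snd.comp continuous_snd).tendsto _).comp hW2t
      set X : ℝ × ℝ := (b.2.1, b.2.2) with hXdef
      have hxgt : Tendsto (fun j => xg (ψ j)) atTop (𝓝 X) := hxg1t.prodMk_nhds hxg2t
      set N : ℝ × ℝ := (b.1, lam) with hNdef
      have hNt : Tendsto (fun j => ((uf (ψ j), lam) : ℝ × ℝ)) atTop (𝓝 N) :=
        hut.prodMk_nhds tendsto_const_nhds
      have hG2ψ : ∀ᶠ j in atTop, GOOD2 (ψ j) := hψ.tendsto_atTop.eventually hG2ev
      have hxφψ : Tendsto (fun j => xf (φ (ψ j))) atTop (𝓝 ((z₀, r) : ℝ × ℝ)) := by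
        have h := hxt.comp hψ.tendsto_atTop
        rwa [hcase] at h
      have hPψ : Tendsto (fun j => P (φ (ψ j))) atTop (𝓝 p) := hPφ.comp hψ.tendsto_atTop
      have hQψ : Tendsto (fun j => Q (φ (ψ j))) atTop (𝓝 q) := hQφ.comp hψ.tendsto_atTop
      have hcN : cle ((z₀, r) : ℝ × ℝ) N := aux_cle_lim hxφψ hNt
        (by filter_upwards [hG2ψ] with j hj; exact (hPR2 (ψ j) hj).1)
      have hpN : cle p N := aux_cle_lim hPψ hNt
        (by filter_upwards [hG2ψ] with j hj; exact (hPR2 (ψ j) hj).2.1)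
      have hNX : cle N X := aux_cle_lim hNt hxgt
        (by filter_upwards [hG2ψ] with j hj; exact (hPR2 (ψ j) hj).2.2.1)
      have hXq : cle X q := aux_cle_lim hxgt hQψ
        (by filter_upwards [hG2ψ] with j hj; exact (hPR2 (ψ j) hj).2.2.2.1)
      have hXne : X ≠ ((z₀, r) : ℝ × ℝ) := by
        intro hEq
        have h1 : lam ≤ X.2 := aux_cle_snd hNX
        have h2 : X.2 = r := congrArg Prod.snd hEq
        linarith
      have hcX : cle ((z₀, r) : ℝ × ℝ) X := aux_cle_trans hcN hNX
      have hErr2t : Tendsto (fun j => 2 * (ε (φ (ψ j)) + 2 * ε' (φ (ψ j)))) atTop (𝓝 0) := by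
        have h := ((hεφ.comp hψ.tendsto_atTop).add
          ((hε'φ.comp hψ.tendsto_atTop).const_mul 2)).const_mul 2
        simpa using h
      have hkey := aux_two_piece hLs' (hφ.comp hψ)
        (u := fun j => ((P (φ (ψ j)), ((uf (ψ j), lam) : ℝ × ℝ)) : (ℝ × ℝ) × (ℝ × ℝ)))
        (v := fun j => ((xg (ψ j), Q (φ (ψ j))) : (ℝ × ℝ) × (ℝ × ℝ)))
        (hPψ.prodMk_nhds hNt) (hxgt.prodMk_nhds hQψ)
        (hyφ.comp hψ.tendsto_atTop) hErr2t
        (by filter_upwards [hG2ψ] with j hj; exact (hPR2 (ψ j) hj).2.2.2.2)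
      have hXle : e X q ≤ ePlus e ((z₀, r) : ℝ × ℝ) q := by
        rw [hEPq]
        exact le_csSup (aux_bddAbove_slice he _ _) ⟨X, ⟨hcX, hXne⟩, rfl⟩
      exact ⟨N, hcN, rfl, by linarith⟩
    choose Nf hN2 hN1 hN4 using claim
    have hNt2 : Tendsto (fun m => (Nf m).2) atTop (𝓝 r) := by
      have hseq : Tendsto (fun m : ℕ => (q.2 - r) / ((m : ℝ) + 2)) atTop (𝓝 0) := by
        have h1 : Tendsto (fun m : ℕ => ((m : ℝ) + 2)) atTop atTop :=
          tendsto_atTop_add_const_right atTop 2 tendsto_natCast_atTop_atTop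
        have h2 := h1.inv_tendsto_atTop
        have h3 := h2.const_mul (q.2 - r)
        simpa [div_eq_mul_inv] using h3
      have h4 : Tendsto (fun m : ℕ => r + (q.2 - r) / ((m : ℝ) + 2)) atTop (𝓝 (r + 0)) :=
        tendsto_const_nhds.add hseq
      rw [add_zero] at h4
      exact h4.congr (fun m => (hN1 m).symm)
    have hNt1 : Tendsto (fun m => (Nf m).1) atTop (𝓝 z₀) := by
      have hb : ∀ m, ‖(Nf m).1 - z₀‖ ≤ (Nf m).2 - r := by
        intro m
        have h := hN2 m
        have h' : |(Nf m).1 - z₀| ≤ (Nf m).2 - r := h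
        simpa [Real.norm_eq_abs] using h'
      have hto : Tendsto (fun m => (Nf m).2 - r) atTop (𝓝 0) := by
        simpa using hNt2.sub_const r
      have h := squeeze_zero_norm hb hto
      have h2 := h.add_const z₀
      simpa using h2
    have hNft : Tendsto Nf atTop (𝓝 ((z₀, r) : ℝ × ℝ)) := hNt1.prodMk_nhds hNt2
    set δ2 : ℝ := (C - sSup S) / 2 with hδ2def
    have hδ2 : 0 < δ2 := by rw [hδ2def]; linarith
    have husc := he.usc ((p, ((z₀, r) : ℝ × ℝ)) : (ℝ × ℝ) × (ℝ × ℝ))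
      (e p ((z₀, r) : ℝ × ℝ) + δ2) (by linarith)
    have hev := (tendsto_const_nhds.prodMk_nhds hNft).eventually husc
    obtain ⟨m, hm⟩ := hev.exists
    have h4 := hN4 m
    have hm' : e p (Nf m) < e p ((z₀, r) : ℝ × ℝ) + δ2 := hm
    linarith
  · -- non-collapse case
    have hkey := aux_two_piece hLs' hφ
      (u := fun k => ((P (φ k), ((zf (φ k), r1 (φ k)) : ℝ × ℝ)) : (ℝ × ℝ) × (ℝ × ℝ)))
      (v := fun k => ((xf (φ k), Q (φ k)) : (ℝ × ℝ) × (ℝ × ℝ)))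
      (hPφ.prodMk_nhds hczt) (hxt.prodMk_nhds hQφ) hyφ hErrt
      (by filter_upwards [hGφ] with k hk; exact (hPR (φ k) hk).2.2.2.2.2.2)
    have hRle : e R₀ q ≤ ePlus e ((z₀, r) : ℝ × ℝ) q := by
      rw [hEPq]
      exact le_csSup (aux_bddAbove_slice he _ _) ⟨R₀, ⟨hc_R, hcase⟩, rfl⟩
    linarith

end
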